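/- Let X_d ⊂ P^{n+1} be a hypersurface of degree d over a field k having multiplicity m along an h-plane Λ, and let X̃_d be the blow-up of X_d along Λ with exceptional divisor Ẽ. Then X̃_d is isomorphic to a divisor in the projective bundle P(O_{P^{n−h}}(1) ⊕ O_{P^{n−h}}^{⊕(h+1)}) over P^{n−h}, and the exceptional divisor Ẽ is a divisor of bidegree (m, d−m) in P^{n−h} × P^h. -/
import Mathlib


open MvPolynomial

/-- the blow-up lemma:
Let `X_d = {f = 0} ⊂ ℙ^{n+1}` be a hypersurface of degree `d` having multiplicity `m` along
the `h`-plane `Λ = {z_0 = ... = z_{n−h} = 0}` (every monomial of `f` has degree at least `m`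
in the first `n−h+1` variables).  The blow-up of `ℙ^{n+1}` along `Λ` is the toric variety
`P(O_{ℙ^{n−h}}(1) ⊕ O_{ℙ^{n−h}}^{⊕(h+1)})` with Cox coordinates `x_0, ..., x_{n−h}` (of
degree `(1,0)`), `y_0` (of degree `(−1,1)`) and `y_1, ..., y_{h+1}` (of degree `(0,1)`),
blow-down map `(x, y) ↦ [x_0 y_0 : ... : x_{n−h} y_0 : y_1 : ... : y_{h+1}]`.

Then the strict transform `X̃_d` of `X_d` is the divisor `{f̃ = 0}` in this projective
bundle, where `f̃` satisfies `f(x_0 y_0, ..., x_{n−h} y_0, y_1, ..., y_{h+1}) = y_0^m · f̃`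
and is multihomogeneous for the Cox grading (second conjunct; torus weights
`x_i ↦ s x_i`, `y_0 ↦ t y_0`, `y_j ↦ s t y_j` give `f̃ ↦ s^d t^{d−m} f̃`),
and the exceptional divisor `Ẽ = X̃_d ∩ {y_0 = 0}` is a divisor of bidegree `(m, d − m)`
in `ℙ^{n−h} × ℙ^h` (third conjunct:  every monomial of `f̃|_{y_0 = 0}` has degree exactly
`m` in the `x`-variables and `d − m` in the `y`-variables).

Here the ambient variables of `ℙ^{n+1}` are indexed by `Fin (n−h+1) ⊕ Fin (h+1)`
(`z_0, ..., z_{n−h}` on the left) and those of the blow-up by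
`Fin (n−h+1) ⊕ (Unit ⊕ Fin (h+1))` (`y_0` being the `Unit` coordinate). -/
theorem blowup_along_plane_strict_transform (k : Type) [Field k]
    (n h d m : ℕ) (hh : h + 1 ≤ n) (hmd : m ≤ d)
    (f : MvPolynomial (Fin (n - h + 1) ⊕ Fin (h + 1)) k)
    (hf : f.IsHomogeneous d)
    (hmult : ∀ σ ∈ f.support, m ≤ ∑ i, σ (Sum.inl i)) :
    ∃ ft : MvPolynomial (Fin (n - h + 1) ⊕ (Unit ⊕ Fin (h + 1))) k,
      (∀ (x : Fin (n - h + 1) → k) (y0 : k) (y : Fin (h + 1) → k),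
        eval (Sum.elim (fun i => x i * y0) y) f
          = y0 ^ m * eval (Sum.elim x (Sum.elim (fun _ => y0) y)) ft) ∧
      (∀ (s t : k) (x : Fin (n - h + 1) → k) (y0 : k) (y : Fin (h + 1) → k),
        eval (Sum.elim (fun i => s * x i)
            (Sum.elim (fun _ => t * y0) (fun j => s * t * y j))) ft
          = s ^ d * t ^ (d - m) * eval (Sum.elim x (Sum.elim (fun _ => y0) y)) ft) ∧
      (∀ σ ∈ (aeval (Sum.elim
            (fun i => (X (Sum.inl i) : MvPolynomial (Fin (n - h + 1) ⊕ Fin (h + 1)) k))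
            (Sum.elim (fun _ => 0) (fun j => X (Sum.inr j)))) ft).support,
        (∑ i, σ (Sum.inl i)) = m ∧ (∑ j, σ (Sum.inr j)) = d - m) := by
  classical
  have hdeg : ∀ σ ∈ f.support,
      (∑ i, σ (Sum.inl i)) + (∑ j, σ (Sum.inr j)) = d := by
    intro σ hσ
    have h1 : σ.degree = d := by
      by_contra h'
      exact (mem_support_iff.mp hσ) (hf.coeff_eq_zero h')
    have h2 : σ.degree = ∑ v, σ v := by
      refine Finset.sum_subset (Finset.subset_univ _) ?_
      intro x _ hx
      exact Finsupp.notMem_support_iff.mp hx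
    rw [← h1, h2, Fintype.sum_sum_type]
  refine ⟨∑ σ ∈ f.support, (C (coeff σ f)) *
      ((∏ i, X (Sum.inl i) ^ σ (Sum.inl i)) *
        (X (Sum.inr (Sum.inl ())) ^ ((∑ i, σ (Sum.inl i)) - m) *
          ∏ j, X (Sum.inr (Sum.inr j)) ^ σ (Sum.inr j))), ?_, ?_, ?_⟩
  · intro x y0 y
    rw [eval_eq', map_sum, Finset.mul_sum]
    refine Finset.sum_congr rfl fun σ hσ => ?_
    have hm : m ≤ ∑ i, σ (Sum.inl i) := hmult σ hσ
    simp only [map_mul, map_pow, map_prod, eval_C, eval_X, Sum.elim_inl, Sum.elim_inr]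
    rw [Fintype.prod_sum_type]
    simp only [Sum.elim_inl, Sum.elim_inr, mul_pow]
    rw [Finset.prod_mul_distrib, Finset.prod_pow_eq_pow_sum]
    have key : y0 ^ (∑ i, σ (Sum.inl i))
        = y0 ^ m * y0 ^ ((∑ i, σ (Sum.inl i)) - m) := by
      rw [← pow_add, Nat.add_sub_cancel' hm]
    rw [key]; ring
  · intro s t x y0 y
    rw [map_sum, map_sum, Finset.mul_sum]
    refine Finset.sum_congr rfl fun σ hσ => ?_
    have hm : m ≤ ∑ i, σ (Sum.inl i) := hmult σ hσ
    have hd := hdeg σ hσ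
    simp only [map_mul, map_pow, map_prod, eval_C, eval_X, Sum.elim_inl, Sum.elim_inr,
      mul_pow]
    rw [Finset.prod_mul_distrib, Finset.prod_mul_distrib, Finset.prod_mul_distrib,
      Finset.prod_pow_eq_pow_sum, Finset.prod_pow_eq_pow_sum, Finset.prod_pow_eq_pow_sum]
    have e1 : s ^ d = s ^ (∑ i, σ (Sum.inl i)) * s ^ (∑ j, σ (Sum.inr j)) := by
      rw [← pow_add, hd]
    have e2 : t ^ (d - m)
        = t ^ ((∑ i, σ (Sum.inl i)) - m) * t ^ (∑ j, σ (Sum.inr j)) := by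
      rw [← pow_add, ← hd, Nat.sub_add_comm hm]
    rw [e1, e2]; ring
  · intro σ hσ
    rw [map_sum] at hσ
    obtain ⟨τ, hτf, hττ⟩ := Finset.mem_biUnion.mp (MvPolynomial.support_sum hσ)
    have hm : m ≤ ∑ i, τ (Sum.inl i) := hmult τ hτf
    have hd := hdeg τ hτf
    simp only [map_mul, map_pow, map_prod, aeval_C, aeval_X, Sum.elim_inl,
      Sum.elim_inr] at hττ
    rcases Nat.lt_or_ge m (∑ i, τ (Sum.inl i)) with hlt | hge
    · rw [zero_pow (by omega)] at hττ
      simp at hττ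
    · have hAm : (∑ i, τ (Sum.inl i)) = m := le_antisymm hge hm
      rw [hAm, Nat.sub_self, pow_zero, one_mul] at hττ
      have hmono : ((algebraMap k (MvPolynomial (Fin (n - h + 1) ⊕ Fin (h + 1)) k))
            (coeff τ f) * ((∏ i, X (Sum.inl i) ^ τ (Sum.inl i)) *
          ∏ j, (X (Sum.inr j) : MvPolynomial (Fin (n - h + 1) ⊕ Fin (h + 1)) k) ^ τ (Sum.inr j)))
          = monomial τ (coeff τ f) := by
        rw [monomial_eq, Finsupp.prod_fintype _ _ (fun _ => pow_zero _), Fintype.prod_sum_type]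
        rw [algebraMap_eq]
      rw [hmono] at hττ
      have hτσ : σ = τ := by
        have := MvPolynomial.support_monomial_subset hττ
        simpa using this
      subst hτσ
      exact ⟨hAm, by omega⟩
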